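/- Let p ≡ 1 (mod 4) be prime. The subgroup of functions ℕ → ℤ/2ℤ generated by the p projected prime clocks [p,0],…,[p,p−1] has order exactly 2^(p−1), and is isomorphic to (ℤ/2ℤ)^(p−1). -/

import Mathlib

open Finset

private def clkmap (p : ℕ) : (Fin p → ZMod 2) →ₗ[ZMod 2] (ℕ → ZMod 2) where
  toFun c := fun m => ∑ t, c t * (((m + t.val) % p : ℕ) : ZMod 2)
  map_add' c d := by funext m; simp [add_mul, Finset.sum_add_distrib]
  map_smul' r c := by funext m; simp [Finset.mul_sum, mul_assoc]

private lemma clkmap_apply (p : ℕ) (c : Fin p → ZMod 2) (m : ℕ) :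
    clkmap p c m = ∑ t, c t * (((m + t.val) % p : ℕ) : ZMod 2) := rfl

open Fin.NatCast in
private lemma clk_orbit_sum (p : ℕ) [NeZero p] (m : ℕ) :
    ∑ t : Fin p, (((m + t.val) % p : ℕ) : ZMod 2) = ∑ r ∈ Finset.range p, (r : ZMod 2) := by
  rw [← Fin.sum_univ_eq_sum_range]
  refine Fintype.sum_equiv (Equiv.addLeft (↑m : Fin p)) _ _ fun t => ?_
  have h : ((↑m : Fin p) + t).val = (m + t.val) % p := by
    simp only [Fin.add_def, Fin.val_natCast]
    exact Nat.mod_add_mod m p t.val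
  simp only [Equiv.coe_addLeft, h]

private lemma clk_total (p : ℕ) (hp : p.Prime) (h4 : p % 4 = 1) :
    ∑ r ∈ Finset.range p, (r : ZMod 2) = 0 := by
  have h2 : 2 ∣ ∑ r ∈ Finset.range p, r := by
    have hg := Finset.sum_range_id_mul_two p
    obtain ⟨k, hk⟩ : 4 ∣ p - 1 := by omega
    have h1 : (∑ r ∈ Finset.range p, r) * 2 = (p * (2 * k)) * 2 := by
      rw [hg, hk]; ring
    have h2 := Nat.eq_of_mul_eq_mul_right (by norm_num) h1
    exact ⟨p * k, by rw [h2]; ring⟩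
  rw [← Nat.cast_sum]
  exact (ZMod.natCast_eq_zero_iff _ 2).2 h2

private lemma clk_diff (p : ℕ) (hp : p.Prime) (hodd : p % 2 = 1) (m : ℕ) (t : Fin p) :
    (((m + 1 + t.val) % p : ℕ) : ZMod 2) + (((m + t.val) % p : ℕ) : ZMod 2)
      = if (m + t.val) % p = p - 1 then 0 else 1 := by
  have hp2 := hp.two_le
  have hlt : (m + t.val) % p < p := Nat.mod_lt _ hp.pos
  have e1 : m + 1 + t.val = (m + t.val) + 1 := by ring
  by_cases h : (m + t.val) % p = p - 1
  · rw [if_pos h]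
    have h1 : (m + 1 + t.val) % p = 0 := by
      rw [e1, Nat.add_mod, h, Nat.mod_eq_of_lt (show 1 < p by omega)]
      have : p - 1 + 1 = p := by omega
      rw [this, Nat.mod_self]
    rw [h1, h]
    have : ((p - 1 : ℕ) : ZMod 2) = 0 :=
      (ZMod.natCast_eq_zero_iff _ 2).2 (by omega)
    rw [this]; simp
  · rw [if_neg h]
    have h1 : (m + 1 + t.val) % p = (m + t.val) % p + 1 := by
      rw [e1, Nat.add_mod, Nat.mod_eq_of_lt (show 1 < p by omega)]
      exact Nat.mod_eq_of_lt (by omega)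
    rw [h1]
    push_cast
    have h2 : (2 : ZMod 2) = 0 := rfl
    linear_combination (((m + t.val) % p : ℕ) : ZMod 2) * h2

theorem stmt_17 (p : ℕ) (hp : p.Prime) (h4 : p % 4 = 1) :
    Nat.card (AddSubgroup.closure
      {f : ℕ → ZMod 2 | ∃ t < p, f = fun m => (((m + t) % p : ℕ) : ZMod 2)})
      = 2 ^ (p - 1) ∧
    Nonempty ((AddSubgroup.closure
      {f : ℕ → ZMod 2 | ∃ t < p, f = fun m => (((m + t) % p : ℕ) : ZMod 2)})
      ≃+ (Fin (p - 1) → ZMod 2)) := by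
  have : NeZero p := ⟨hp.pos.ne'⟩
  have hodd : p % 2 = 1 := by omega
  -- the all-ones vector is in the kernel
  have hone : (fun _ => (1 : ZMod 2)) ∈ LinearMap.ker (clkmap p) := by
    rw [LinearMap.mem_ker]
    funext m
    rw [clkmap_apply]
    simp only [one_mul]
    rw [clk_orbit_sum p m, clk_total p hp h4]
    rfl
  -- kernel is exactly the span of the all-ones vector
  have hker : LinearMap.ker (clkmap p)
      = Submodule.span (ZMod 2) {fun _ => (1 : ZMod 2)} := by
    apply le_antisymm
    · intro c hc
      rw [LinearMap.mem_ker] at hc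
      have key : ∀ τ : Fin p, c τ = ∑ t, c t := by
        intro τ
        set m := p - 1 - τ.val with hm
        have hτlt := τ.isLt
        have hmt : (m + τ.val) % p = p - 1 := by
          have h : m + τ.val = p - 1 := by omega
          rw [h, Nat.mod_eq_of_lt (by omega)]
        have huniq : ∀ t : Fin p, (m + t.val) % p = p - 1 ↔ t = τ := by
          intro t
          constructor
          · intro h
            have h1 : (m + t.val) % p = (m + τ.val) % p := by rw [h, hmt]
            have h2 : t.val % p = τ.val % p := Nat.ModEq.add_left_cancel' m h1
            exact Fin.ext (by rwa [Nat.mod_eq_of_lt t.isLt, Nat.mod_eq_of_lt τ.isLt] at h2)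
          · rintro rfl; exact hmt
        have hA : ∑ t, c t * (((m + 1 + t.val) % p : ℕ) : ZMod 2) = 0 := by
          have := congrFun hc (m + 1)
          simpa [clkmap_apply] using this
        have hB : ∑ t, c t * (((m + t.val) % p : ℕ) : ZMod 2) = 0 := by
          have := congrFun hc m
          simpa [clkmap_apply] using this
        have hsum : ∑ t, c t * ((((m + 1 + t.val) % p : ℕ) : ZMod 2)
            + (((m + t.val) % p : ℕ) : ZMod 2)) = 0 := by
          calc ∑ t, c t * ((((m + 1 + t.val) % p : ℕ) : ZMod 2)
                + (((m + t.val) % p : ℕ) : ZMod 2))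
              = (∑ t, c t * (((m + 1 + t.val) % p : ℕ) : ZMod 2))
                + ∑ t, c t * (((m + t.val) % p : ℕ) : ZMod 2) := by
                rw [← Finset.sum_add_distrib]
                exact Finset.sum_congr rfl fun t _ => by ring
            _ = 0 := by rw [hA, hB, add_zero]
        have hsum2 : ∑ t : Fin p, (if t = τ then (0:ZMod 2) else c t) = 0 := by
          have hstep : ∑ t : Fin p, (if t = τ then (0:ZMod 2) else c t)
              = ∑ t, c t * ((((m + 1 + t.val) % p : ℕ) : ZMod 2)
                + (((m + t.val) % p : ℕ) : ZMod 2)) := by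
            refine Finset.sum_congr rfl fun t _ => ?_
            rw [clk_diff p hp hodd m t]
            simp only [huniq t]
            by_cases h : t = τ <;> simp [h]
          rw [hstep, hsum]
        have hsplit : (∑ t : Fin p, if t = τ then (0:ZMod 2) else c t)
            + (∑ t : Fin p, if t = τ then c t else 0) = ∑ t, c t := by
          rw [← Finset.sum_add_distrib]
          refine Finset.sum_congr rfl fun t _ => ?_
          by_cases h : t = τ <;> simp [h]
        have hτ : (∑ t : Fin p, if t = τ then c t else (0:ZMod 2)) = c τ := by
          simp [Finset.sum_ite_eq']
        rw [hsum2, zero_add, hτ] at hsplit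
        exact hsplit
      refine Submodule.mem_span_singleton.2 ⟨∑ t, c t, ?_⟩
      funext τ
      simp [(key τ).symm]
    · rw [Submodule.span_le, Set.singleton_subset_iff]
      exact hone
  -- the closure equals the range of clkmap
  have hrange : AddSubgroup.closure
      {f : ℕ → ZMod 2 | ∃ t < p, f = fun m => (((m + t) % p : ℕ) : ZMod 2)}
      = (LinearMap.range (clkmap p)).toAddSubgroup := by
    apply le_antisymm
    · rw [AddSubgroup.closure_le]
      rintro f ⟨t, ht, rfl⟩
      refine ⟨Pi.single ⟨t, ht⟩ 1, ?_⟩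
      funext m
      rw [clkmap_apply]
      rw [Finset.sum_eq_single (⟨t, ht⟩ : Fin p)]
      · simp
      · intro b _ hb; simp [Pi.single_apply, hb]
      · intro h; exact absurd (Finset.mem_univ _) h
    · rintro f ⟨c, rfl⟩
      have hrep : clkmap p c = ∑ t : Fin p,
          c t • (fun m => (((m + t.val) % p : ℕ) : ZMod 2)) := by
        funext m
        rw [clkmap_apply]
        simp [Finset.sum_apply]
      rw [hrep]
      refine AddSubgroup.sum_mem _ fun t _ => ?_
      have hx : ∀ x : ZMod 2, x = 0 ∨ x = 1 := by decide
      have hmem : (fun m => (((m + t.val) % p : ℕ) : ZMod 2))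
          ∈ AddSubgroup.closure
            {f : ℕ → ZMod 2 | ∃ t < p, f = fun m => (((m + t) % p : ℕ) : ZMod 2)} :=
        AddSubgroup.subset_closure ⟨t.val, t.isLt, rfl⟩
      rcases hx (c t) with h | h <;> rw [h]
      · simpa using (AddSubgroup.zero_mem _)
      · simpa using hmem
  -- dimension count
  have hones_ne : (fun _ => (1 : ZMod 2)) ≠ (0 : Fin p → ZMod 2) := by
    intro h
    have := congrFun h ⟨0, hp.pos⟩
    simp at this
  have hfr : Module.finrank (ZMod 2) (LinearMap.range (clkmap p)) = p - 1 := by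
    have h1 := LinearMap.finrank_range_add_finrank_ker (clkmap p)
    rw [hker] at h1
    rw [finrank_span_singleton hones_ne] at h1
    have h2 : Module.finrank (ZMod 2) (Fin p → ZMod 2) = p := by
      simp [Module.finrank_pi]
    rw [h2] at h1
    omega
  have hfr2 : Module.finrank (ZMod 2) (Fin (p - 1) → ZMod 2) = p - 1 := by
    simp [Module.finrank_pi]
  obtain ⟨e⟩ := FiniteDimensional.nonempty_linearEquiv_of_finrank_eq
    (hfr.trans hfr2.symm)
  constructor
  · rw [hrange]
    have hc : Nat.card ((LinearMap.range (clkmap p)).toAddSubgroup)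
        = Nat.card (Fin (p - 1) → ZMod 2) := Nat.card_congr e.toEquiv
    rw [hc]
    simp [Nat.card_pi, Nat.card_zmod]
  · rw [hrange]
    exact ⟨e.toAddEquiv⟩
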